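/- Let r ≥ 2 be an integer radix, D ≥ 1, and let p = Σ_{i=0}^{D-1} d_i · r^{-(i+1)} be a D-digit number in the symmetric maximally redundant signed-digit radix-r representation (integer digits |d_i| ≤ r − 1). Then every real number y with |y − p| ≤ r^{-D} admits a full representation agreeing with p in its first D digits: there exists e : ℕ → ℤ with |e_i| ≤ r − 1 for all i, e_i = d_i for all i < D, and y = Σ_{i=0}^∞ e_i · r^{-(i+1)}. -/

import Mathlib

private lemma aux_pow_eq (r : ℕ) (hr : 2 ≤ r) (i : ℕ) :
    (r : ℝ) ^ (-(i + 1 : ℤ)) = ((r : ℝ)⁻¹) ^ (i + 1) := by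
  rw [show (-(i + 1 : ℤ)) = -((i + 1 : ℕ) : ℤ) by push_cast; ring, zpow_neg,
    zpow_natCast, inv_pow]

private lemma aux_geom_one (r : ℕ) (hr : 2 ≤ r) :
    HasSum (fun i : ℕ => ((r : ℝ) - 1) * (r : ℝ) ^ (-(i + 1 : ℤ))) 1 := by
  have hr1 : (1 : ℝ) < (r : ℝ) := by exact_mod_cast hr.trans_lt' one_lt_two
  have hr0 : (r : ℝ) ≠ 0 := by positivity
  have hq0 : (0 : ℝ) ≤ (r : ℝ)⁻¹ := by positivity
  have hq1 : (r : ℝ)⁻¹ < 1 := by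
    rw [inv_lt_one_iff₀]; right; exact hr1
  have hgeom := hasSum_geometric_of_lt_one hq0 hq1
  have := hgeom.mul_left (((r : ℝ) - 1) * (r : ℝ)⁻¹)
  have heq : (fun i : ℕ => ((r : ℝ) - 1) * (r : ℝ)⁻¹ * ((r : ℝ)⁻¹) ^ i)
      = fun i : ℕ => ((r : ℝ) - 1) * (r : ℝ) ^ (-(i + 1 : ℤ)) := by
    funext i
    rw [aux_pow_eq r hr i, pow_succ]
    ring
  rw [heq] at this
  convert this using 1
  have hrne : (r : ℝ) - 1 ≠ 0 := by linarith
  · rfl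
  have hrne' : (r : ℝ) - 1 ≠ 0 := by linarith
  field_simp

private lemma aux_digits (r : ℕ) (hr : 2 ≤ r) (z : ℝ) (h0 : 0 ≤ z) (h1 : z ≤ 1) :
    ∃ a : ℕ → ℤ, (∀ i, 0 ≤ a i ∧ a i ≤ (r : ℤ) - 1) ∧
      HasSum (fun i : ℕ => (a i : ℝ) * (r : ℝ) ^ (-(i + 1 : ℤ))) z := by
  have hr1 : (1 : ℝ) < (r : ℝ) := by exact_mod_cast hr.trans_lt' one_lt_two
  have hr0 : (0 : ℝ) < (r : ℝ) := by linarith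
  rcases eq_or_lt_of_le h1 with h1 | h1
  · -- z = 1 : use constant digits r - 1
    have hrz : (2 : ℤ) ≤ (r : ℤ) := by exact_mod_cast hr
    refine ⟨fun _ => (r : ℤ) - 1, fun i => ⟨by show (0:ℤ) ≤ (r:ℤ) - 1; omega, le_rfl⟩, ?_⟩
    subst h1
    have := aux_geom_one r hr
    convert this using 2 with i
    push_cast
    ring
  -- z < 1 : greedy expansion
  set a : ℕ → ℤ := fun i => ⌊z * (r : ℝ) ^ (i + 1)⌋ - r * ⌊z * (r : ℝ) ^ i⌋ with ha
  have hlow : ∀ n : ℕ, (r : ℤ) * ⌊z * (r : ℝ) ^ n⌋ ≤ ⌊z * (r : ℝ) ^ (n + 1)⌋ := by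
    intro n
    rw [Int.le_floor]
    push_cast
    calc (r : ℝ) * ⌊z * (r : ℝ) ^ n⌋ ≤ (r : ℝ) * (z * (r : ℝ) ^ n) := by
          exact mul_le_mul_of_nonneg_left (Int.floor_le _) hr0.le
      _ = z * (r : ℝ) ^ (n + 1) := by ring
  have hhigh : ∀ n : ℕ, ⌊z * (r : ℝ) ^ (n + 1)⌋ ≤ (r : ℤ) * ⌊z * (r : ℝ) ^ n⌋ + ((r : ℤ) - 1) := by
    intro n
    have : ⌊z * (r : ℝ) ^ (n + 1)⌋ < (r : ℤ) * (⌊z * (r : ℝ) ^ n⌋ + 1) := by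
      rw [Int.floor_lt]
      push_cast
      calc z * (r : ℝ) ^ (n + 1) = (r : ℝ) * (z * (r : ℝ) ^ n) := by ring
        _ < (r : ℝ) * (⌊z * (r : ℝ) ^ n⌋ + 1) :=
          mul_lt_mul_of_pos_left (Int.lt_floor_add_one _) hr0
    rw [mul_add, mul_one] at this
    omega
  have hbound : ∀ i, 0 ≤ a i ∧ a i ≤ (r : ℤ) - 1 := by
    intro i
    have h1 := hlow i
    have h2 := hhigh i
    constructor <;> simp only [ha] <;> omega
  refine ⟨a, hbound, ?_⟩
  -- partial sums
  have hfloor0 : ⌊z⌋ = 0 := Int.floor_eq_zero_iff.mpr ⟨h0, h1⟩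
  have hps : ∀ n : ℕ, ∑ i ∈ Finset.range n, (a i : ℝ) * (r : ℝ) ^ (-(i + 1 : ℤ))
      = (⌊z * (r : ℝ) ^ n⌋ : ℝ) / (r : ℝ) ^ n := by
    intro n
    induction n with
    | zero => simp [hfloor0]
    | succ n ih =>
        rw [Finset.sum_range_succ, ih]
        have hne : (r : ℝ) ^ n ≠ 0 := by positivity
        have hne' : (r : ℝ) ^ (n + 1) ≠ 0 := by positivity
        rw [aux_pow_eq r hr n]
        simp only [ha]
        push_cast
        rw [inv_pow]
        field_simp
        ring
  -- convergence of partial sums to z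
  have htend : Filter.Tendsto (fun n => ∑ i ∈ Finset.range n, (a i : ℝ) * (r : ℝ) ^ (-(i + 1 : ℤ)))
      Filter.atTop (nhds z) := by
    have hdiff : ∀ n : ℕ, 0 ≤ z - (⌊z * (r : ℝ) ^ n⌋ : ℝ) / (r : ℝ) ^ n ∧
        z - (⌊z * (r : ℝ) ^ n⌋ : ℝ) / (r : ℝ) ^ n ≤ ((r : ℝ)⁻¹) ^ n := by
      intro n
      have hpn : (0 : ℝ) < (r : ℝ) ^ n := by positivity
      have hfl := Int.floor_le (z * (r : ℝ) ^ n)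
      have hfl2 := (Int.lt_floor_add_one (z * (r : ℝ) ^ n)).le
      constructor
      · rw [sub_nonneg, div_le_iff₀ hpn]; exact hfl
      · rw [inv_pow, sub_le_iff_le_add]
        calc z ≤ ((⌊z * (r : ℝ) ^ n⌋ : ℝ) + 1) / (r : ℝ) ^ n := by
              rw [le_div_iff₀ hpn]; exact hfl2
          _ = ((r : ℝ) ^ n)⁻¹ + (⌊z * (r : ℝ) ^ n⌋ : ℝ) / (r : ℝ) ^ n := by
              rw [add_div, add_comm, one_div]
    have hq1 : (r : ℝ)⁻¹ < 1 := by rw [inv_lt_one_iff₀]; right; exact hr1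
    have hq0 : (0 : ℝ) ≤ (r : ℝ)⁻¹ := by positivity
    have hgeo : Filter.Tendsto (fun n : ℕ => ((r : ℝ)⁻¹) ^ n) Filter.atTop (nhds 0) :=
      tendsto_pow_atTop_nhds_zero_of_lt_one hq0 hq1
    have : Filter.Tendsto (fun n : ℕ => z - (⌊z * (r : ℝ) ^ n⌋ : ℝ) / (r : ℝ) ^ n)
        Filter.atTop (nhds 0) := by
      apply squeeze_zero (fun n => (hdiff n).1) (fun n => (hdiff n).2) hgeo
    have := this.const_sub z
    simp only [sub_sub_cancel, sub_zero] at this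
    have heq : (fun n : ℕ => (⌊z * (r : ℝ) ^ n⌋ : ℝ) / (r : ℝ) ^ n)
        = fun n => ∑ i ∈ Finset.range n, (a i : ℝ) * (r : ℝ) ^ (-(i + 1 : ℤ)) := by
      funext n; rw [hps n]
    rwa [heq] at this
  -- summability
  have hsum : Summable (fun i : ℕ => (a i : ℝ) * (r : ℝ) ^ (-(i + 1 : ℤ))) := by
    apply Summable.of_nonneg_of_le (fun i => ?_) (fun i => ?_) (aux_geom_one r hr).summable
    · have := (hbound i).1
      have hp : (0 : ℝ) < (r : ℝ) ^ (-(i + 1 : ℤ)) := by positivity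
      have : (0 : ℝ) ≤ (a i : ℝ) := by exact_mod_cast this
      positivity
    · have := (hbound i).2
      have hp : (0 : ℝ) < (r : ℝ) ^ (-(i + 1 : ℤ)) := by positivity
      have hcast : (a i : ℝ) ≤ (r : ℝ) - 1 := by exact_mod_cast this
      exact mul_le_mul_of_nonneg_right hcast hp.le
  exact hsum.hasSum_iff_tendsto_nat.mpr htend

/-- If `p` is a `D`-digit symmetric maximally redundant signed-digit
radix-`r` number, then every real `y` with `|y - p| ≤ r^(-D)` admits a full
representation agreeing with `p` in its first `D` digits. -/
theorem redundant_representation_extension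
    (r D : ℕ) (hr : 2 ≤ r) (hD : 1 ≤ D)
    (d : ℕ → ℤ) (hd : ∀ i, |d i| ≤ (r : ℤ) - 1)
    (p : ℝ) (hp : p = ∑ i ∈ Finset.range D, (d i : ℝ) * (r : ℝ) ^ (-(i + 1 : ℤ)))
    (y : ℝ) (hy : |y - p| ≤ (r : ℝ) ^ (-(D : ℤ))) :
    ∃ e : ℕ → ℤ, (∀ i, |e i| ≤ (r : ℤ) - 1) ∧ (∀ i < D, e i = d i) ∧
      HasSum (fun i : ℕ => (e i : ℝ) * (r : ℝ) ^ (-(i + 1 : ℤ))) y := by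
  have hr1 : (1 : ℝ) < (r : ℝ) := by exact_mod_cast hr.trans_lt' one_lt_two
  have hr0 : (0 : ℝ) < (r : ℝ) := by linarith
  set t : ℝ := y - p with ht
  have hzD : (0 : ℝ) < (r : ℝ) ^ (-(D : ℤ)) := by positivity
  have hzD' : (0 : ℝ) < (r : ℝ) ^ (D : ℤ) := by positivity
  set z : ℝ := |t| * (r : ℝ) ^ (D : ℤ) with hz
  have hz0 : 0 ≤ z := by positivity
  have hz1 : z ≤ 1 := by
    rw [hz]
    calc |t| * (r : ℝ) ^ (D : ℤ) ≤ (r : ℝ) ^ (-(D : ℤ)) * (r : ℝ) ^ (D : ℤ) :=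
          mul_le_mul_of_nonneg_right hy hzD'.le
      _ = 1 := by rw [← zpow_add₀ (ne_of_gt hr0)]; simp
  obtain ⟨a, hab, has⟩ := aux_digits r hr z hz0 hz1
  set ε : ℤ := if 0 ≤ t then 1 else -1 with hε
  have hεt : (ε : ℝ) * |t| = t := by
    rw [hε]
    split_ifs with h
    · simp [abs_of_nonneg h]
    · push_cast; rw [abs_of_neg (lt_of_not_ge h)]; ring
  set e : ℕ → ℤ := fun i => if i < D then d i else ε * a (i - D) with he
  refine ⟨e, ?_, ?_, ?_⟩
  · intro i
    simp only [he]
    split_ifs with h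
    · exact hd i
    · have h' := hab (i - D)
      simp only [hε]
      split_ifs with h2
      · rw [one_mul, abs_of_nonneg h'.1]; exact h'.2
      · rw [neg_one_mul, abs_neg, abs_of_nonneg h'.1]; exact h'.2
  · intro i hi
    simp [he, hi]
  · -- the sum
    set f : ℕ → ℝ := fun i => (e i : ℝ) * (r : ℝ) ^ (-(i + 1 : ℤ)) with hf
    have hpsum : ∑ i ∈ Finset.range D, f i = p := by
      rw [hp]
      apply Finset.sum_congr rfl
      intro i hi
      rw [hf, he]
      simp [Finset.mem_range.mp hi]
    have htail : HasSum (fun n : ℕ => f (n + D)) t := by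
      have hmul := has.mul_left ((ε : ℝ) * (r : ℝ) ^ (-(D : ℤ)))
      have hval : (ε : ℝ) * (r : ℝ) ^ (-(D : ℤ)) * z = t := by
        rw [hz]
        calc (ε : ℝ) * (r : ℝ) ^ (-(D : ℤ)) * (|t| * (r : ℝ) ^ (D : ℤ))
            = ((ε : ℝ) * |t|) * ((r : ℝ) ^ (-(D : ℤ)) * (r : ℝ) ^ (D : ℤ)) := by ring
          _ = t := by rw [hεt, ← zpow_add₀ (ne_of_gt hr0)]; simp
      rw [hval] at hmul
      convert hmul using 2 with n
      · rfl
      simp only [hf, he]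
      have hnD : ¬ (n + D < D) := by omega
      simp only [hnD, if_false]
      have hsub : n + D - D = n := by omega
      rw [hsub]
      push_cast
      rw [show (-((n : ℤ) + (D : ℤ) + 1)) = (-(D : ℤ)) + (-((n : ℤ) + 1)) by ring,
        zpow_add₀ (ne_of_gt hr0)]
      ring
    have := (hasSum_nat_add_iff (f := f) D).mp htail
    rw [hpsum] at this
    have hyy : t + p = y := by rw [ht]; ring
    rwa [hyy] at this
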